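/- For every T > 0, the mixed partial derivative ∂_T ∂_S² ∂_U² F_even(S,T,U) evaluated at S = U = 0 equals 4·(d/dT)[ − (C'(T)/C(T))⁴ + 4(Σ² − α²)·(C'(T)/C(T))² ]. -/

import Mathlib

open Real MeasureTheory Filter Topology

/-- `Σ = √(3α²/2 − 1/8)`. -/
noncomputable def Sg (α : ℝ) : ℝ := Real.sqrt (3 * α ^ 2 / 2 - 1 / 8)

/-- `C(T) = Σ·cosh(ΣT) + α·sinh(ΣT)`. -/
noncomputable def Cg (α : ℝ) (T : ℝ) : ℝ :=
  Sg α * Real.cosh (Sg α * T) + α * Real.sinh (Sg α * T)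

/-- `Ĉ(T) = 2αΣ·cosh(ΣT) + (α²+Σ²)·sinh(ΣT)`. -/
noncomputable def Chat (α : ℝ) (T : ℝ) : ℝ :=
  2 * α * Sg α * Real.cosh (Sg α * T) + (α ^ 2 + Sg α ^ 2) * Real.sinh (Sg α * T)

/-- The even part of the three-point generating function. -/
noncomputable def Feven (α : ℝ) (S T U : ℝ) : ℝ :=
  (1 / Sg α ^ 2) * (Cg α S ^ 2 * Cg α T ^ 2 * Cg α U ^ 2 * Cg α (S + T + U) ^ 2)
    / (Cg α (S + T) ^ 2 * Cg α (T + U) ^ 2 * Cg α (U + S) ^ 2)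

/-- The odd part of the three-point generating function. -/
noncomputable def Fodd (α : ℝ) (S T U : ℝ) : ℝ :=
  ((α ^ 2 - Sg α ^ 2) ^ 2 / Sg α ^ 2) *
    (Real.sinh (Sg α * S) ^ 2 * Real.sinh (Sg α * T) ^ 2 * Real.sinh (Sg α * U) ^ 2
      * Chat α (S + T + U) ^ 2)
    / (Cg α (S + T) ^ 2 * Cg α (T + U) ^ 2 * Cg α (U + S) ^ 2)

/-- `F = F_even + F_odd`. -/
noncomputable def Fg (α : ℝ) (S T U : ℝ) : ℝ := Feven α S T U + Fodd α S T U

/-- derivative of Cg -/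
noncomputable def Dg (α : ℝ) (x : ℝ) : ℝ :=
  Sg α ^ 2 * Real.sinh (Sg α * x) + α * Sg α * Real.cosh (Sg α * x)

/-- logarithmic derivative -/
noncomputable def Lg (α : ℝ) (x : ℝ) : ℝ := Dg α x / Cg α x

lemma sq_Sg {α : ℝ} (h1 : 1 / (2 * Real.sqrt 3) < α) : Sg α ^ 2 = 3 * α ^ 2 / 2 - 1 / 8 := by
  have h3 : (0:ℝ) < Real.sqrt 3 := Real.sqrt_pos.2 (by norm_num)
  have hα : 0 < α := lt_trans (by positivity) h1
  have h12 : 1 / 12 < α ^ 2 := by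
    have := mul_self_lt_mul_self (by positivity) h1
    have h9 : Real.sqrt 3 * Real.sqrt 3 = 3 := Real.mul_self_sqrt (by norm_num)
    calc (1:ℝ)/12 = 1 / (2*Real.sqrt 3) * (1/(2*Real.sqrt 3)) := by
          field_simp; nlinarith [h9]
      _ < α ^ 2 := by nlinarith [this]
  exact Real.sq_sqrt (by nlinarith)

lemma Sg_pos {α : ℝ} (h1 : 1 / (2 * Real.sqrt 3) < α) : 0 < Sg α := by
  have h3 : (0:ℝ) < Real.sqrt 3 := Real.sqrt_pos.2 (by norm_num)
  have hα : 0 < α := lt_trans (by positivity) h1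
  have := sq_Sg h1
  have : 0 ≤ Sg α := Real.sqrt_nonneg _
  rcases this.lt_or_eq with h | h
  · exact h
  · exfalso
    have h2 := sq_Sg h1
    rw [← h] at h2
    have h12 : 1 / 12 < α ^ 2 := by
      have := mul_self_lt_mul_self (by positivity) h1
      have h9 : Real.sqrt 3 * Real.sqrt 3 = 3 := Real.mul_self_sqrt (by norm_num)
      calc (1:ℝ)/12 = 1 / (2*Real.sqrt 3) * (1/(2*Real.sqrt 3)) := by
            field_simp; nlinarith [h9]
        _ < α ^ 2 := by nlinarith [this]
    nlinarith

lemma Sg_lt {α : ℝ} (h1 : 1 / (2 * Real.sqrt 3) < α) (h2 : α < 1 / 2) : Sg α < α := by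
  have h3 : (0:ℝ) < Real.sqrt 3 := Real.sqrt_pos.2 (by norm_num)
  have hα : 0 < α := lt_trans (by positivity) h1
  have hs := sq_Sg h1
  have hp := Sg_pos h1
  nlinarith [hs, hp]

lemma hasDerivAt_lin (c x : ℝ) : HasDerivAt (fun y : ℝ => c * y) c x := by
  simpa using (hasDerivAt_id x).const_mul c

lemma hasDerivAt_Cg (α x : ℝ) : HasDerivAt (Cg α) (Dg α x) x := by
  have hc : HasDerivAt (fun y : ℝ => Real.cosh (Sg α * y)) (Real.sinh (Sg α * x) * Sg α) x :=
    (Real.hasDerivAt_cosh (Sg α * x)).comp x (hasDerivAt_lin (Sg α) x)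
  have hs : HasDerivAt (fun y : ℝ => Real.sinh (Sg α * y)) (Real.cosh (Sg α * x) * Sg α) x :=
    (Real.hasDerivAt_sinh (Sg α * x)).comp x (hasDerivAt_lin (Sg α) x)
  have h := (hc.const_mul (Sg α)).add (hs.const_mul α)
  refine h.congr_deriv ?_
  unfold Dg; ring

lemma hasDerivAt_Dg (α x : ℝ) : HasDerivAt (Dg α) (Sg α ^ 2 * Cg α x) x := by
  have hc : HasDerivAt (fun y : ℝ => Real.cosh (Sg α * y)) (Real.sinh (Sg α * x) * Sg α) x :=
    (Real.hasDerivAt_cosh (Sg α * x)).comp x (hasDerivAt_lin (Sg α) x)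
  have hs : HasDerivAt (fun y : ℝ => Real.sinh (Sg α * y)) (Real.cosh (Sg α * x) * Sg α) x :=
    (Real.hasDerivAt_sinh (Sg α * x)).comp x (hasDerivAt_lin (Sg α) x)
  have h := (hs.const_mul (Sg α ^ 2)).add (hc.const_mul (α * Sg α))
  refine h.congr_deriv ?_
  unfold Cg; ring

lemma Dg_pos {α : ℝ} (h1 : 1 / (2 * Real.sqrt 3) < α) (h2 : α < 1 / 2) (x : ℝ) : 0 < Dg α x := by
  have hσ := Sg_pos h1
  have hσα := Sg_lt h1 h2
  have hc := Real.cosh_pos (Sg α * x)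
  have hq := Real.cosh_sq_sub_sinh_sq (Sg α * x)
  unfold Dg
  nlinarith [sq_nonneg (Real.sinh (Sg α * x) + Real.cosh (Sg α * x)),
    sq_nonneg (Real.sinh (Sg α * x) - Real.cosh (Sg α * x)),
    mul_pos hσ hc, mul_pos (sub_pos.2 hσα) hc]

lemma Cg_zero (α : ℝ) : Cg α 0 = Sg α := by simp [Cg]

lemma Dg_zero (α : ℝ) : Dg α 0 = α * Sg α := by simp [Dg]

lemma strictMono_Cg {α : ℝ} (h1 : 1 / (2 * Real.sqrt 3) < α) (h2 : α < 1 / 2) :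
    StrictMono (Cg α) := by
  have : ∀ x, deriv (Cg α) x = Dg α x := fun x => (hasDerivAt_Cg α x).deriv
  apply strictMono_of_deriv_pos
  intro x; rw [this]; exact Dg_pos h1 h2 x

lemma hasDerivAt_Lg {α : ℝ} (x : ℝ) (h : Cg α x ≠ 0) :
    HasDerivAt (Lg α) (Sg α ^ 2 - Lg α x ^ 2) x := by
  have := (hasDerivAt_Dg α x).div (hasDerivAt_Cg α x) h
  refine this.congr_deriv ?_
  unfold Lg
  field_simp


lemma Lg_zero {α : ℝ} (h1 : 1 / (2 * Real.sqrt 3) < α) : Lg α 0 = α := by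
  have := Sg_pos h1
  rw [Lg, Cg_zero, Dg_zero]
  field_simp

lemma hasDerivAt_Cg_shift (α a x : ℝ) : HasDerivAt (fun y => Cg α (a + y)) (Dg α (a + x)) x := by
  have h := (hasDerivAt_Cg α (a + x)).comp x ((hasDerivAt_id x).const_add a)
  simpa [Function.comp_def] using h

lemma hasDerivAt_Cg_shift' (α a x : ℝ) : HasDerivAt (fun y => Cg α (y + a)) (Dg α (x + a)) x := by
  have h := (hasDerivAt_Cg α (x + a)).comp x ((hasDerivAt_id x).add_const a)
  simpa [Function.comp_def] using h

lemma hasDerivAt_Lg_shift (α a x : ℝ) (h : Cg α (a + x) ≠ 0) :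
    HasDerivAt (fun y => Lg α (a + y)) (Sg α ^ 2 - Lg α (a + x) ^ 2) x := by
  have h2 := (hasDerivAt_Lg (a + x) h).comp x ((hasDerivAt_id x).const_add a)
  simpa [Function.comp_def] using h2

lemma hasDerivAt_quot (K p' q' r' s' x : ℝ) (p q r s : ℝ → ℝ)
    (hp : HasDerivAt p p' x) (hq : HasDerivAt q q' x)
    (hr : HasDerivAt r r' x) (hs : HasDerivAt s s' x)
    (hp0 : p x ≠ 0) (hq0 : q x ≠ 0) (hr0 : r x ≠ 0) (hs0 : s x ≠ 0) :
    HasDerivAt (fun y => K * (p y ^ 2 * q y ^ 2) / (r y ^ 2 * s y ^ 2))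
      (K * (p x ^ 2 * q x ^ 2) / (r x ^ 2 * s x ^ 2) *
        (2 * (p' / p x + q' / q x - r' / r x - s' / s x))) x := by
  have hnum := ((hp.pow 2).mul (hq.pow 2)).const_mul K
  have hden := (hr.pow 2).mul (hs.pow 2)
  have hden0 : r x ^ 2 * s x ^ 2 ≠ 0 := by positivity
  have h := hnum.div hden hden0
  refine h.congr_deriv ?_
  norm_num
  field_simp
  ring

lemma hasDerivAt_Feven_U (α S T U : ℝ)
    (hU : Cg α U ≠ 0) (hSTU : Cg α (S + T + U) ≠ 0)
    (hST : Cg α (S + T) ≠ 0) (hTU : Cg α (T + U) ≠ 0) (hUS : Cg α (U + S) ≠ 0) :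
    HasDerivAt (fun U' => Feven α S T U')
      (Feven α S T U *
        (2 * (Lg α U + Lg α (S + T + U) - Lg α (T + U) - Lg α (U + S)))) U := by
  have hfe : (fun U' => Feven α S T U') = fun U' =>
      (1 / Sg α ^ 2 * (Cg α S ^ 2 * Cg α T ^ 2) / Cg α (S + T) ^ 2) *
        (Cg α U' ^ 2 * Cg α (S + T + U') ^ 2) /
        (Cg α (T + U') ^ 2 * Cg α (U' + S) ^ 2) := by
    funext U'; unfold Feven; ring
  rw [hfe]
  have h := hasDerivAt_quot (1 / Sg α ^ 2 * (Cg α S ^ 2 * Cg α T ^ 2) / Cg α (S + T) ^ 2)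
    (Dg α U) (Dg α (S + T + U)) (Dg α (T + U)) (Dg α (U + S)) U
    (Cg α) (fun y => Cg α (S + T + y)) (fun y => Cg α (T + y)) (fun y => Cg α (y + S))
    (hasDerivAt_Cg α U) (hasDerivAt_Cg_shift α (S + T) U) (hasDerivAt_Cg_shift α T U)
    (hasDerivAt_Cg_shift' α S U) hU hSTU hTU hUS
  refine h.congr_deriv ?_
  unfold Feven Lg
  ring

lemma Feven_U_zero {α : ℝ} (h1 : 1 / (2 * Real.sqrt 3) < α) (S T : ℝ)
    (hS : Cg α S ≠ 0) (hT : Cg α T ≠ 0) (hST : Cg α (S + T) ≠ 0) :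
    Feven α S T 0 = 1 := by
  have hσ := Sg_pos h1
  have hσ0 : Sg α ≠ 0 := ne_of_gt hσ
  unfold Feven
  rw [add_zero, zero_add, add_zero, Cg_zero]
  field_simp


/-- value of the second `U`-derivative at `U = 0`. -/
noncomputable def GU (α S T : ℝ) : ℝ :=
  (2 * (Lg α 0 + Lg α (S + T) - Lg α T - Lg α S)) ^ 2 +
    2 * ((Sg α ^ 2 - Lg α 0 ^ 2) + (Sg α ^ 2 - Lg α (S + T) ^ 2)
      - (Sg α ^ 2 - Lg α T ^ 2) - (Sg α ^ 2 - Lg α S ^ 2))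

lemma iterU {α : ℝ} (h1 : 1 / (2 * Real.sqrt 3) < α) {δ : ℝ} (hδ : 0 < δ)
    (hpos : ∀ x, -δ < x → 0 < Cg α x)
    (S T : ℝ) (hS : -(δ/2) < S) (hT : -(δ/2) < T) (hST : -(δ/2) < S + T) :
    iteratedDeriv 2 (fun U' => Feven α S T U') 0 = GU α S T := by
  have key : ∀ U : ℝ, |U| < δ/2 → HasDerivAt (fun U' => Feven α S T U')
      (Feven α S T U *
        (2 * (Lg α U + Lg α (S + T + U) - Lg α (T + U) - Lg α (U + S)))) U := by
    intro U hUb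
    have h1' := abs_lt.1 hUb
    apply hasDerivAt_Feven_U
    · exact ne_of_gt (hpos _ (by linarith))
    · exact ne_of_gt (hpos _ (by linarith))
    · exact ne_of_gt (hpos _ (by linarith))
    · exact ne_of_gt (hpos _ (by linarith))
    · exact ne_of_gt (hpos _ (by linarith))
  have hev : ∀ᶠ U in 𝓝 (0:ℝ), |U| < δ/2 := by
    have : Set.Ioo (-(δ/2)) (δ/2) ∈ 𝓝 (0:ℝ) := Ioo_mem_nhds (by linarith) (by linarith)
    filter_upwards [this] with U hU
    exact abs_lt.2 ⟨hU.1, hU.2⟩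
  have hderiv_ev : deriv (fun U' => Feven α S T U') =ᶠ[𝓝 (0:ℝ)]
      fun U => Feven α S T U *
        (2 * (Lg α U + Lg α (S + T + U) - Lg α (T + U) - Lg α (U + S))) := by
    filter_upwards [hev] with U hU
    exact (key U hU).deriv
  rw [show (2:ℕ) = 1 + 1 from rfl, iteratedDeriv_succ, iteratedDeriv_one]
  rw [hderiv_ev.deriv_eq]
  -- now compute derivative of the product at 0
  have hC0 : Cg α 0 ≠ 0 := ne_of_gt (hpos 0 (by linarith))
  have hCS : Cg α S ≠ 0 := ne_of_gt (hpos _ (by linarith))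
  have hCT : Cg α T ≠ 0 := ne_of_gt (hpos _ (by linarith))
  have hCST : Cg α (S + T) ≠ 0 := ne_of_gt (hpos _ (by linarith))
  have hF : HasDerivAt (fun U' => Feven α S T U')
      (Feven α S T 0 *
        (2 * (Lg α 0 + Lg α (S + T + 0) - Lg α (T + 0) - Lg α (0 + S)))) 0 :=
    key 0 (by simp; linarith)
  have hM : HasDerivAt (fun U => 2 * (Lg α U + Lg α (S + T + U) - Lg α (T + U) - Lg α (U + S)))
      (2 * ((Sg α ^ 2 - Lg α 0 ^ 2) + (Sg α ^ 2 - Lg α (S + T + 0) ^ 2)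
        - (Sg α ^ 2 - Lg α (T + 0) ^ 2) - (Sg α ^ 2 - Lg α (0 + S) ^ 2))) 0 := by
    have hL0 : HasDerivAt (Lg α) (Sg α ^ 2 - Lg α 0 ^ 2) 0 := hasDerivAt_Lg 0 hC0
    have hLST : HasDerivAt (fun U => Lg α (S + T + U)) (Sg α ^ 2 - Lg α (S + T + 0) ^ 2) 0 :=
      hasDerivAt_Lg_shift α (S + T) 0 (by rw [add_zero]; exact hCST)
    have hLT : HasDerivAt (fun U => Lg α (T + U)) (Sg α ^ 2 - Lg α (T + 0) ^ 2) 0 :=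
      hasDerivAt_Lg_shift α T 0 (by rw [add_zero]; exact hCT)
    have hLS : HasDerivAt (fun U => Lg α (U + S)) (Sg α ^ 2 - Lg α (0 + S) ^ 2) 0 := by
      have h2 := (hasDerivAt_Lg (0 + S) (by rw [zero_add]; exact hCS)).comp 0
        ((hasDerivAt_id 0).add_const S)
      simpa [Function.comp_def] using h2
    exact (((hL0.add hLST).sub hLT).sub hLS).const_mul 2
  have hprod := hF.mul hM
  erw [hprod.deriv]
  rw [Feven_U_zero h1 S T hCS hCT hCST]
  simp only [add_zero, zero_add]
  unfold GU
  ring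

lemma hasDerivAt_Lg_shift' (α a x : ℝ) (h : Cg α (x + a) ≠ 0) :
    HasDerivAt (fun y => Lg α (y + a)) (Sg α ^ 2 - Lg α (x + a) ^ 2) x := by
  have h2 := (hasDerivAt_Lg (x + a) h).comp x ((hasDerivAt_id x).add_const a)
  simpa [Function.comp_def] using h2

/-- `∂_S GU` -/
noncomputable def GS1 (α S T : ℝ) : ℝ :=
  2 * (2 * (Lg α 0 + Lg α (S + T) - Lg α T - Lg α S)) *
      (2 * ((Sg α ^ 2 - Lg α (S + T) ^ 2) - (Sg α ^ 2 - Lg α S ^ 2))) +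
    2 * ((-2 * Lg α (S + T) * (Sg α ^ 2 - Lg α (S + T) ^ 2)) -
         (-2 * Lg α S * (Sg α ^ 2 - Lg α S ^ 2)))

/-- `∂_S² GU` at `S = 0`. -/
noncomputable def HT (α T : ℝ) : ℝ :=
  2 * (2 * ((Sg α ^ 2 - Lg α T ^ 2) - (Sg α ^ 2 - Lg α 0 ^ 2))) ^ 2
    + 2 * ((-2 * (Sg α ^ 2 - Lg α T ^ 2) ^ 2 + 4 * Lg α T ^ 2 * (Sg α ^ 2 - Lg α T ^ 2))
         - (-2 * (Sg α ^ 2 - Lg α 0 ^ 2) ^ 2 + 4 * Lg α 0 ^ 2 * (Sg α ^ 2 - Lg α 0 ^ 2)))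

lemma hasDerivAt_GU (α S T : ℝ) (hCS : Cg α S ≠ 0) (hCST : Cg α (S + T) ≠ 0) :
    HasDerivAt (fun S' => GU α S' T) (GS1 α S T) S := by
  have hLST : HasDerivAt (fun y => Lg α (y + T)) (Sg α ^ 2 - Lg α (S + T) ^ 2) S :=
    hasDerivAt_Lg_shift' α T S hCST
  have hLS : HasDerivAt (Lg α) (Sg α ^ 2 - Lg α S ^ 2) S := hasDerivAt_Lg S hCS
  have hA := ((((hasDerivAt_const S (Lg α 0)).add hLST).sub
      (hasDerivAt_const S (Lg α T))).sub hLS).const_mul 2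
  have hBST := (hLST.pow 2).const_sub (Sg α ^ 2)
  have hBS := (hLS.pow 2).const_sub (Sg α ^ 2)
  have hB := ((((hasDerivAt_const S (Sg α ^ 2 - Lg α 0 ^ 2)).add hBST).sub
      (hasDerivAt_const S (Sg α ^ 2 - Lg α T ^ 2))).sub hBS).const_mul 2
  have h := (hA.pow 2).add hB
  have hfun : (fun S' => GU α S' T) = (fun S' =>
      (2 * (Lg α 0 + Lg α (S' + T) - Lg α T - Lg α S')) ^ 2 +
        2 * ((Sg α ^ 2 - Lg α 0 ^ 2) + (Sg α ^ 2 - Lg α (S' + T) ^ 2)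
          - (Sg α ^ 2 - Lg α T ^ 2) - (Sg α ^ 2 - Lg α S' ^ 2))) := by
    funext S'; unfold GU; ring
  rw [hfun]
  refine h.congr_deriv ?_
  unfold GS1
  simp only [Pi.add_apply, Pi.sub_apply, Pi.mul_apply, Pi.pow_apply]
  ring

lemma hasDerivAt_GS1 (α T : ℝ) (hC0 : Cg α 0 ≠ 0) (hCT : Cg α (0 + T) ≠ 0) :
    HasDerivAt (fun S' => GS1 α S' T) (HT α T) 0 := by
  have hLST : HasDerivAt (fun y => Lg α (y + T)) (Sg α ^ 2 - Lg α (0 + T) ^ 2) 0 :=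
    hasDerivAt_Lg_shift' α T 0 hCT
  have hLS : HasDerivAt (Lg α) (Sg α ^ 2 - Lg α 0 ^ 2) 0 := hasDerivAt_Lg 0 hC0
  have hA := ((((hasDerivAt_const (0:ℝ) (Lg α 0)).add hLST).sub
      (hasDerivAt_const (0:ℝ) (Lg α T))).sub hLS).const_mul 2
  have hPST := (hLST.pow 2).const_sub (Sg α ^ 2)
  have hPS := (hLS.pow 2).const_sub (Sg α ^ 2)
  have hP := (hPST.sub hPS).const_mul 2
  have hQST := (hLST.const_mul (-2)).mul hPST
  have hQS := (hLS.const_mul (-2)).mul hPS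
  have hQ := (hQST.sub hQS).const_mul 2
  have h := ((hA.const_mul 2).mul hP).add hQ
  have hfun : (fun S' => GS1 α S' T) = (fun S' =>
      2 * (2 * (Lg α 0 + Lg α (S' + T) - Lg α T - Lg α S')) *
          (2 * ((Sg α ^ 2 - Lg α (S' + T) ^ 2) - (Sg α ^ 2 - Lg α S' ^ 2))) +
        2 * ((-2 * Lg α (S' + T) * (Sg α ^ 2 - Lg α (S' + T) ^ 2)) -
             (-2 * Lg α S' * (Sg α ^ 2 - Lg α S' ^ 2)))) := by
    funext S'; unfold GS1; ring
  rw [hfun]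
  refine h.congr_deriv ?_
  unfold HT
  simp only [Pi.add_apply, Pi.sub_apply, Pi.mul_apply, Pi.pow_apply]
  rw [zero_add]
  ring

lemma iterS {α : ℝ} (h1 : 1 / (2 * Real.sqrt 3) < α) (h2 : α < 1 / 2) {δ : ℝ} (hδ : 0 < δ)
    (hpos : ∀ x, -δ < x → 0 < Cg α x) (T : ℝ) (hT : -(δ/4) < T) :
    iteratedDeriv 2 (fun S' => iteratedDeriv 2 (fun U' => Feven α S' T U') 0) 0 = HT α T := by
  have hball : ∀ᶠ S' in 𝓝 (0:ℝ), |S'| < δ/4 := by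
    have : Set.Ioo (-(δ/4)) (δ/4) ∈ 𝓝 (0:ℝ) := Ioo_mem_nhds (by linarith) (by linarith)
    filter_upwards [this] with S' hS'
    exact abs_lt.2 ⟨hS'.1, hS'.2⟩
  have heq1 : (fun S' => iteratedDeriv 2 (fun U' => Feven α S' T U') 0) =ᶠ[𝓝 (0:ℝ)]
      fun S' => GU α S' T := by
    filter_upwards [hball] with S' hS'
    have h1' := abs_lt.1 hS'
    exact iterU h1 hδ hpos S' T (by linarith) (by linarith) (by linarith)
  rw [show (2:ℕ) = 1 + 1 from rfl, iteratedDeriv_succ, iteratedDeriv_one]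
  rw [(heq1.deriv).deriv_eq]
  have heq2 : deriv (fun S' => GU α S' T) =ᶠ[𝓝 (0:ℝ)] fun S' => GS1 α S' T := by
    filter_upwards [hball] with S' hS'
    have h1' := abs_lt.1 hS'
    exact (hasDerivAt_GU α S' T (ne_of_gt (hpos _ (by linarith)))
      (ne_of_gt (hpos _ (by linarith)))).deriv
  rw [heq2.deriv_eq]
  exact (hasDerivAt_GS1 α T (ne_of_gt (hpos 0 (by linarith)))
    (ne_of_gt (hpos _ (by rw [zero_add]; linarith)))).deriv

/-- For `T > 0`,
`∂_T ∂_S² ∂_U² F_even(S,T,U)|_{S=U=0}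
  = 4·(d/dT)[−(C'(T)/C(T))⁴ + 4(Σ² − α²)(C'(T)/C(T))²]`. -/
theorem stmt9 (α : ℝ) (h1 : 1 / (2 * Real.sqrt 3) < α) (h2 : α < 1 / 2) :
    ∀ T : ℝ, 0 < T →
      deriv (fun T' =>
          iteratedDeriv 2 (fun S' => iteratedDeriv 2 (fun U' => Feven α S' T' U') 0) 0) T
        = 4 * deriv (fun T' => -(deriv (Cg α) T' / Cg α T') ^ 4
            + 4 * (Sg α ^ 2 - α ^ 2) * (deriv (Cg α) T' / Cg α T') ^ 2) T := by
  intro T hT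
  -- positivity of Cg on a neighborhood of [0, ∞)
  have h0 : 0 < Cg α 0 := by rw [Cg_zero]; exact Sg_pos h1
  have hev : ∀ᶠ x in 𝓝 (0:ℝ), 0 < Cg α x :=
    (hasDerivAt_Cg α 0).continuousAt.eventually (eventually_gt_nhds h0)
  rw [Metric.eventually_nhds_iff] at hev
  obtain ⟨ε, hε, hball⟩ := hev
  set δ := ε / 2 with hδdef
  have hδ : 0 < δ := by positivity
  have hpos : ∀ x, -δ < x → 0 < Cg α x := by
    intro x hx
    rcases le_or_gt 0 x with h | h
    · calc 0 < Cg α 0 := h0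
        _ ≤ Cg α x := (strictMono_Cg h1 h2).monotone h
    · apply hball
      rw [Real.dist_eq, sub_zero, abs_of_neg h]
      simp only [hδdef] at hx
      linarith
  -- LHS
  have heqL : (fun T' =>
      iteratedDeriv 2 (fun S' => iteratedDeriv 2 (fun U' => Feven α S' T' U') 0) 0)
      =ᶠ[𝓝 T] fun T' => HT α T' := by
    have : Set.Ioo (T/2) (T + T) ∈ 𝓝 T := Ioo_mem_nhds (by linarith) (by linarith)
    filter_upwards [this] with T' hT'
    exact iterS h1 h2 hδ hpos T' (by cases hT'; linarith)
  rw [heqL.deriv_eq]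
  -- RHS function in terms of Lg
  have hRfun : (fun T' => -(deriv (Cg α) T' / Cg α T') ^ 4
      + 4 * (Sg α ^ 2 - α ^ 2) * (deriv (Cg α) T' / Cg α T') ^ 2)
      = fun T' => -(Lg α T') ^ 4 + 4 * (Sg α ^ 2 - α ^ 2) * (Lg α T') ^ 2 := by
    funext t
    rw [(hasDerivAt_Cg α t).deriv]
    rfl
  rw [hRfun]
  have hCT : Cg α T ≠ 0 := ne_of_gt (hpos T (by linarith))
  have hLT : HasDerivAt (Lg α) (Sg α ^ 2 - Lg α T ^ 2) T := hasDerivAt_Lg T hCT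
  have hR : HasDerivAt (fun T' => -(Lg α T') ^ 4 + 4 * (Sg α ^ 2 - α ^ 2) * (Lg α T') ^ 2)
      (-(4 * Lg α T ^ 3 * (Sg α ^ 2 - Lg α T ^ 2))
        + 4 * (Sg α ^ 2 - α ^ 2) * (2 * Lg α T * (Sg α ^ 2 - Lg α T ^ 2))) T := by
    have h := ((hLT.pow 4).neg).add ((hLT.pow 2).const_mul (4 * (Sg α ^ 2 - α ^ 2)))
    refine h.congr_deriv ?_
    norm_num
  rw [hR.deriv]
  -- compute deriv of HT at T
  have hX := (hLT.pow 2).const_sub (Sg α ^ 2)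
  have hA := (((hX.sub_const (Sg α ^ 2 - Lg α 0 ^ 2)).const_mul 2).pow 2).const_mul 2
  have h21 := (hX.pow 2).const_mul (-2)
  have h22 := ((hLT.pow 2).const_mul 4).mul hX
  have hB := ((h21.add h22).sub_const
      (-2 * (Sg α ^ 2 - Lg α 0 ^ 2) ^ 2 + 4 * Lg α 0 ^ 2 * (Sg α ^ 2 - Lg α 0 ^ 2))).const_mul 2
  have hHT : HasDerivAt (fun T' => HT α T')
      (32 * Lg α T * (Sg α ^ 2 - Lg α 0 ^ 2) * (Sg α ^ 2 - Lg α T ^ 2)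
        - 16 * Lg α T ^ 3 * (Sg α ^ 2 - Lg α T ^ 2)) T := by
    unfold HT
    refine (hA.add hB).congr_deriv ?_
    norm_num
    ring
  rw [hHT.deriv, Lg_zero h1]
  ring
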